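/- (Factorization into irreducibles in ℤ[j].) If a ∈ ℤ[j] is neither a zero divisor (η(a) ≠ 0) nor a unit, then there exist a unit u of ℤ[j] and irreducible elements q₁, …, q_m of ℤ[j] such that a = u·q₁⋯q_m. -/

import Mathlib

lemma isUnit_of_norm_unit_Zj (a : ℤ√1) (h : IsUnit a.norm) : IsUnit a := by
  have hc : ((a.norm : ℤ) : ℤ√1) = a * star a := Zsqrtd.norm_eq_mul_conj a
  rcases Int.isUnit_iff.mp h with h1 | h1
  · exact IsUnit.of_mul_eq_one (a := a) (star a) (by rw [← hc, h1]; rfl)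
  · refine IsUnit.of_mul_eq_one (a := a) (-star a) ?_
    rw [mul_neg, ← hc, h1]
    rfl

lemma norm_natAbs_eq_one_of_isUnit_Zj (a : ℤ√1) (h : IsUnit a) :
    a.norm.natAbs = 1 := by
  obtain ⟨b, hb⟩ := isUnit_iff_exists_inv.mp h
  have : a.norm * b.norm = 1 := by rw [← Zsqrtd.norm_mul, hb, Zsqrtd.norm_one]
  have := IsUnit.of_mul_eq_one (a := a.norm) b.norm this
  rcases Int.isUnit_iff.mp this with h1 | h1 <;> simp [h1]

theorem factorization_aux_Zj : ∀ n (a : ℤ√1), a.norm.natAbs = n →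
    Zsqrtd.norm a ≠ 0 → ¬ IsUnit a →
    ∃ (u : (ℤ√1)ˣ) (qs : List (ℤ√1)),
      (∀ q ∈ qs, Irreducible q) ∧ a = (u : ℤ√1) * qs.prod := by
  intro n
  induction n using Nat.strong_induction_on with
  | _ n ih =>
    intro a hn ha hu
    by_cases hirr : Irreducible a
    · exact ⟨1, [a], by simpa using hirr, by simp⟩
    · rw [irreducible_iff] at hirr
      push_neg at hirr
      obtain ⟨z, w, hzw, hz, hw⟩ := hirr hu
      have hnorm : a.norm = z.norm * w.norm := by rw [hzw, Zsqrtd.norm_mul]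
      have hz0 : z.norm ≠ 0 := fun h => ha (by rw [hnorm, h, zero_mul])
      have hw0 : w.norm ≠ 0 := fun h => ha (by rw [hnorm, h, mul_zero])
      have hz2 : 2 ≤ z.norm.natAbs := by
        rcases Nat.lt_or_ge z.norm.natAbs 2 with h | h
        · interval_cases hzn : z.norm.natAbs
          · exact absurd (Int.natAbs_eq_zero.mp hzn) hz0
          · exact absurd (isUnit_of_norm_unit_Zj z
              (Int.isUnit_iff.mpr (by omega))) hz
        · exact h
      have hw2 : 2 ≤ w.norm.natAbs := by
        rcases Nat.lt_or_ge w.norm.natAbs 2 with h | h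
        · interval_cases hwn : w.norm.natAbs
          · exact absurd (Int.natAbs_eq_zero.mp hwn) hw0
          · exact absurd (isUnit_of_norm_unit_Zj w
              (Int.isUnit_iff.mpr (by omega))) hw
        · exact h
      have hprod : z.norm.natAbs * w.norm.natAbs = n := by
        rw [← Int.natAbs_mul, ← hnorm, hn]
      have hzlt : z.norm.natAbs < n := by nlinarith
      have hwlt : w.norm.natAbs < n := by nlinarith
      obtain ⟨uz, qz, hqz, hez⟩ := ih _ hzlt z rfl hz0 hz
      obtain ⟨uw, qw, hqw, hew⟩ := ih _ hwlt w rfl hw0 hw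
      refine ⟨uz * uw, qz ++ qw, ?_, ?_⟩
      · intro q hq
        rcases List.mem_append.mp hq with h | h
        · exact hqz q h
        · exact hqw q h
      · rw [hzw, hez, hew, List.prod_append, Units.val_mul]
        ring

theorem factorization_into_irreducibles_Zj (a : ℤ√1) (ha : Zsqrtd.norm a ≠ 0)
    (hu : ¬ IsUnit a) :
    ∃ (u : (ℤ√1)ˣ) (qs : List (ℤ√1)),
      (∀ q ∈ qs, Irreducible q) ∧ a = (u : ℤ√1) * qs.prod := by
  exact factorization_aux_Zj _ a rfl ha hu
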